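/- For every real number z, tanh(z) equals the value of the generalized continued fraction z/(1 + z^2/(3 + z^2/(5 + z^2/(7 + ...)))), i.e., with partial denominators 1, 3, 5, 7, ... and partial numerators z, z^2, z^2, .... -/

import Mathlib

open Real Filter

private noncomputable def aaa (n j : ℕ) : ℝ :=
  (Nat.factorial (n + j) : ℝ) / ((Nat.factorial j : ℝ) * (Nat.factorial (2*n + 2*j + 1) : ℝ))

private lemma fac_pos (m : ℕ) : (0:ℝ) < (Nat.factorial m : ℝ) :=
  Nat.cast_pos.mpr (Nat.factorial_pos m)

private lemma aaa_nonneg (n j : ℕ) : 0 ≤ aaa n j := by unfold aaa; positivity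

private lemma aaa_zero (n : ℕ) : aaa n 0 = (4*(n:ℝ)+6) * aaa (n+1) 0 := by
  unfold aaa
  have h1 : n + 0 = n := by omega
  have h2 : n + 1 + 0 = n + 1 := by omega
  have h3 : 2*n + 2*0 + 1 = 2*n+1 := by omega
  have h4 : 2*(n+1) + 2*0 + 1 = (2*n+1) + 1 + 1 := by omega
  rw [h1, h2, h3, h4]
  simp only [Nat.factorial_succ]
  have A := fac_pos n
  have B := fac_pos (2*n+1)
  have C := fac_pos 0
  field_simp
  push_cast
  ring

private lemma aaa_succ (n j : ℕ) :
    aaa n (j+1) = (4*(n:ℝ)+6) * aaa (n+1) (j+1) + 4 * aaa (n+2) j := by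
  unfold aaa
  have h1 : n + (j+1) = (n+j) + 1 := by omega
  have h2 : n + 1 + (j+1) = ((n+j) + 1) + 1 := by omega
  have h3 : n + 2 + j = ((n+j) + 1) + 1 := by omega
  have h4 : 2*n + 2*(j+1) + 1 = 2*n+2*j+3 := by omega
  have h5 : 2*(n+1) + 2*(j+1) + 1 = ((2*n+2*j+3) + 1) + 1 := by omega
  have h6 : 2*(n+2) + 2*j + 1 = ((2*n+2*j+3) + 1) + 1 := by omega
  rw [h1, h2, h3, h4, h5, h6]
  simp only [Nat.factorial_succ]
  have A := fac_pos (n+j)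
  have B := fac_pos (2*n+2*j+3)
  have C := fac_pos j
  field_simp
  push_cast
  ring

private lemma aaa_le (n j : ℕ) :
    aaa n j ≤ 1 / ((Nat.factorial j : ℝ) * (Nat.factorial (n+1) : ℝ)) := by
  unfold aaa
  rw [div_le_div_iff₀ (by positivity) (by positivity), one_mul]
  have h1 : Nat.factorial (n+j) * Nat.factorial (n+1) ≤ Nat.factorial (2*n+2*j+1) := by
    have hd : Nat.factorial (n+j) * Nat.factorial (n+j+1) ∣ Nat.factorial (2*n+2*j+1) := by
      have := Nat.factorial_mul_factorial_dvd_factorial_add (n+j) (n+j+1)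
      have he : n+j+(n+j+1) = 2*n+2*j+1 := by omega
      rwa [he] at this
    calc Nat.factorial (n+j) * Nat.factorial (n+1)
        ≤ Nat.factorial (n+j) * Nat.factorial (n+j+1) :=
          Nat.mul_le_mul_left _ (Nat.factorial_le (by omega))
      _ ≤ Nat.factorial (2*n+2*j+1) := Nat.le_of_dvd (Nat.factorial_pos _) hd
  calc ((Nat.factorial (n+j) : ℝ)) * ((Nat.factorial j : ℝ) * (Nat.factorial (n+1) : ℝ))
      = (Nat.factorial j : ℝ) * ((Nat.factorial (n+j) : ℝ) * (Nat.factorial (n+1) : ℝ)) := by ring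
    _ ≤ (Nat.factorial j : ℝ) * (Nat.factorial (2*n+2*j+1) : ℝ) := by
        apply mul_le_mul_of_nonneg_left _ (le_of_lt (fac_pos j))
        exact_mod_cast h1

private lemma summable_term (z : ℝ) (n : ℕ) : Summable (fun j => z ^ (2*j) * aaa n j) := by
  apply Summable.of_nonneg_of_le (f := fun j => (z^2)^j / (Nat.factorial j : ℝ))
  · intro j
    have : z ^ (2*j) = (z^2)^j := by rw [← pow_mul]
    rw [this]
    exact mul_nonneg (by positivity) (aaa_nonneg n j)
  · intro j
    have hz : z ^ (2*j) = (z^2)^j := by rw [← pow_mul]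
    rw [hz]
    calc (z^2)^j * aaa n j ≤ (z^2)^j * (1 / ((Nat.factorial j : ℝ) * (Nat.factorial (n+1) : ℝ))) :=
          mul_le_mul_of_nonneg_left (aaa_le n j) (by positivity)
      _ ≤ (z^2)^j * (1 / (Nat.factorial j : ℝ)) := by
          apply mul_le_mul_of_nonneg_left _ (by positivity)
          rw [div_le_div_iff₀ (by positivity) (fac_pos j), one_mul, one_mul]
          nlinarith [fac_pos j, fac_pos (n+1), (Nat.one_le_cast (α := ℝ)).mpr
            (Nat.one_le_iff_ne_zero.mpr (Nat.factorial_ne_zero (n+1)))]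
      _ = (z^2)^j / (Nat.factorial j : ℝ) := by ring
  · exact Real.summable_pow_div_factorial (z^2)

private noncomputable def SS (z : ℝ) (n : ℕ) : ℝ := ∑' j, z ^ (2*j) * aaa n j

private lemma SS_nonneg (z : ℝ) (n : ℕ) : 0 ≤ SS z n :=
  tsum_nonneg fun j => by
    have : z ^ (2*j) = (z^2)^j := by rw [← pow_mul]
    rw [this]; exact mul_nonneg (by positivity) (aaa_nonneg n j)

private lemma SS_le (z : ℝ) (n : ℕ) :
    SS z n ≤ (∑' j, (z^2)^j / (Nat.factorial j : ℝ)) * (1 / (Nat.factorial (n+1) : ℝ)) := by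
  rw [← tsum_mul_right]
  apply Summable.tsum_le_tsum _ (summable_term z n)
    ((Real.summable_pow_div_factorial (z^2)).mul_right _)
  intro j
  have hz : z ^ (2*j) = (z^2)^j := by rw [← pow_mul]
  rw [hz]
  calc (z^2)^j * aaa n j ≤ (z^2)^j * (1 / ((Nat.factorial j : ℝ) * (Nat.factorial (n+1) : ℝ))) :=
        mul_le_mul_of_nonneg_left (aaa_le n j) (by positivity)
    _ = (z^2)^j / (Nat.factorial j : ℝ) * (1 / (Nat.factorial (n+1) : ℝ)) := by
        field_simp

private lemma SS_rec (z : ℝ) (n : ℕ) :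
    SS z n = (4*(n:ℝ)+6) * SS z (n+1) + 4 * z^2 * SS z (n+2) := by
  have s0 := summable_term z n
  have s1 := summable_term z (n+1)
  have s2 := summable_term z (n+2)
  set h : ℕ → ℝ := fun j => z ^ (2*j) * aaa n j - (4*(n:ℝ)+6) * (z ^ (2*j) * aaa (n+1) j) with hh
  have hsum : Summable h := s0.sub (s1.mul_left _)
  have h0 : h 0 = 0 := by
    simp only [hh, aaa_zero n]; ring
  have hs : ∀ j, h (j+1) = 4 * z^2 * (z ^ (2*j) * aaa (n+2) j) := by
    intro j
    simp only [hh, aaa_succ n j]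
    have : z ^ (2*(j+1)) = z^2 * z^(2*j) := by rw [← pow_add]; ring_nf
    rw [this]; ring
  have key : SS z n - (4*(n:ℝ)+6) * SS z (n+1) = 4 * z^2 * SS z (n+2) := by
    have e1 : SS z n - (4*(n:ℝ)+6) * SS z (n+1) = ∑' j, h j := by
      rw [SS, SS, ← tsum_mul_left]
      exact (Summable.tsum_sub s0 (s1.mul_left _)).symm
    rw [e1, Summable.tsum_eq_zero_add hsum, h0, zero_add]
    have e2 : ∑' j, h (j+1) = ∑' j, 4 * z^2 * (z ^ (2*j) * aaa (n+2) j) := tsum_congr hs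
    rw [e2, tsum_mul_left, SS]
  linarith

private lemma SS_zero (z : ℝ) : z * SS z 0 = Real.sinh z := by
  rw [SS, ← tsum_mul_left, Real.sinh_eq_tsum]
  apply tsum_congr
  intro j
  unfold aaa
  have h1 : 0 + j = j := by omega
  have h2 : 2*0 + 2*j + 1 = 2*j+1 := by omega
  rw [h1, h2]
  have := fac_pos j
  have := fac_pos (2*j+1)
  rw [pow_succ]
  field_simp

private lemma SS_one (z : ℝ) : Real.sinh z - z * Real.cosh z = -2 * z^3 * SS z 1 := by
  have scosh := Real.hasSum_cosh z
  have ssinh := Real.hasSum_sinh z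
  set g : ℕ → ℝ := fun j => z ^ (2*j+1) / (Nat.factorial (2*j+1) : ℝ)
    - z * (z ^ (2*j) / (Nat.factorial (2*j) : ℝ)) with hg
  have hsum : Summable g := ssinh.summable.sub (scosh.summable.mul_left z)
  have e1 : Real.sinh z - z * Real.cosh z = ∑' j, g j := by
    rw [Real.sinh_eq_tsum, Real.cosh_eq_tsum, ← tsum_mul_left]
    exact (Summable.tsum_sub ssinh.summable (scosh.summable.mul_left z)).symm
  have h0 : g 0 = 0 := by simp [hg]
  have hs : ∀ j, g (j+1) = -2 * z^3 * (z ^ (2*j) * aaa 1 j) := by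
    intro j
    simp only [hg]
    unfold aaa
    have h1 : 1 + j = j + 1 := by omega
    have h2 : 2*1 + 2*j + 1 = (2*j+1)+1+1 := by omega
    have e3 : 2*(j+1)+1 = (2*j+1)+1+1 := by omega
    have e4 : 2*(j+1) = (2*j+1)+1 := by omega
    rw [h1, h2, e3, e4]
    simp only [Nat.factorial_succ]
    push_cast
    have A := fac_pos j
    have B := fac_pos (2*j+1)
    have B2 : (0:ℝ) < 2*(j:ℝ)+1+1 := by positivity
    have B3 : (0:ℝ) < 2*(j:ℝ)+1+1+1 := by positivity
    field_simp
    ring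
  rw [e1, Summable.tsum_eq_zero_add hsum, h0, zero_add]
  have e2 : ∑' j, g (j+1) = ∑' j, -2 * z^3 * (z ^ (2*j) * aaa 1 j) := tsum_congr hs
  rw [e2, tsum_mul_left, SS]

/-- Gauss's continued fraction for tanh: `tanh z = z/(1 + z²/(3 + z²/(5 + ...)))`,
as the limit of the convergents `p k / q k`. -/
theorem tanh_gauss_cf (z : ℝ) (p q : ℕ → ℝ)
    (hp0 : p 0 = 0) (hp1 : p 1 = z)
    (hq0 : q 0 = 1) (hq1 : q 1 = 1)
    (hp : ∀ k, 2 ≤ k → p k = (2 * (k : ℝ) - 1) * p (k - 1) + z ^ 2 * p (k - 2))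
    (hq : ∀ k, 2 ≤ k → q k = (2 * (k : ℝ) - 1) * q (k - 1) + z ^ 2 * q (k - 2)) :
    Filter.Tendsto (fun k => p k / q k) Filter.atTop (nhds (Real.tanh z)) := by
  -- the fundamental identity
  have hE : ∀ n, Real.sinh z * q n - Real.cosh z * p n
      = (-1:ℝ)^n * 2^n * z^(2*n+1) * SS z n := by
    have key : ∀ n, (Real.sinh z * q n - Real.cosh z * p n
        = (-1:ℝ)^n * 2^n * z^(2*n+1) * SS z n)
        ∧ (Real.sinh z * q (n+1) - Real.cosh z * p (n+1)
        = (-1:ℝ)^(n+1) * 2^(n+1) * z^(2*(n+1)+1) * SS z (n+1)) := by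
      intro n
      induction n with
      | zero =>
        constructor
        · rw [hp0, hq0]
          have h := SS_zero z
          norm_num
          linarith
        · rw [hp1, hq1]
          have h := SS_one z
          norm_num
          nlinarith [h]
      | succ n ih =>
        refine ⟨ih.2, ?_⟩
        have hpn := hp (n+2) (by omega)
        have hqn := hq (n+2) (by omega)
        have e1 : n+2-1 = n+1 := rfl
        have e2 : n+2-2 = n := rfl
        rw [e1, e2] at hpn hqn
        have step : Real.sinh z * q (n+2) - Real.cosh z * p (n+2)
            = (2*((n:ℝ)+2)-1) * (Real.sinh z * q (n+1) - Real.cosh z * p (n+1))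
              + z^2 * (Real.sinh z * q n - Real.cosh z * p n) := by
          rw [hpn, hqn]; push_cast; ring
        rw [show n+1+1 = n+2 from rfl, step, ih.1, ih.2, SS_rec z n]
        push_cast
        ring
    exact fun n => (key n).1
  -- q is at least 1
  have hq_ge : ∀ n, 1 ≤ q n := by
    have key : ∀ n, 1 ≤ q n ∧ 1 ≤ q (n+1) := by
      intro n
      induction n with
      | zero => exact ⟨by rw [hq0], by rw [hq1]⟩
      | succ n ih =>
        refine ⟨ih.2, ?_⟩
        have hqn := hq (n+2) (by omega)
        have e1 : n+2-1 = n+1 := rfl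
        have e2 : n+2-2 = n := rfl
        rw [e1, e2] at hqn
        rw [show n+1+1 = n+2 from rfl, hqn]
        push_cast
        nlinarith [ih.1, ih.2, sq_nonneg z]
    exact fun n => (key n).1
  have hcosh : (1:ℝ) ≤ Real.cosh z := Real.one_le_cosh z
  set C : ℝ := ∑' j, (z^2)^j / (Nat.factorial j : ℝ) with hC
  have hC0 : 0 ≤ C := tsum_nonneg fun j => by positivity
  -- the error bound
  have hbound : ∀ n, |p n / q n - Real.tanh z| ≤ |z| * C * ((2*z^2)^n / (Nat.factorial n : ℝ)) := by
    intro n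
    have hqn : (0:ℝ) < q n := lt_of_lt_of_le one_pos (hq_ge n)
    have hcosh0 : (0:ℝ) < Real.cosh z := lt_of_lt_of_le one_pos hcosh
    have key : p n / q n - Real.tanh z
        = -(Real.sinh z * q n - Real.cosh z * p n) / (q n * Real.cosh z) := by
      rw [Real.tanh_eq_sinh_div_cosh]
      field_simp
      ring
    rw [key, abs_div, abs_neg]
    have hden : |q n * Real.cosh z| = q n * Real.cosh z := abs_of_pos (by positivity)
    rw [hden]
    have hd1 : (1:ℝ) ≤ q n * Real.cosh z := by nlinarith [hq_ge n, hcosh]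
    have hEn : |Real.sinh z * q n - Real.cosh z * p n|
        = 2^n * |z|^(2*n+1) * SS z n := by
      rw [hE n, abs_mul, abs_mul, abs_mul, abs_pow, abs_pow, abs_pow, abs_neg, abs_one,
        one_pow, one_mul, abs_of_nonneg (SS_nonneg z n), abs_two]
    have hnum : |Real.sinh z * q n - Real.cosh z * p n|
        ≤ |z| * C * ((2*z^2)^n / (Nat.factorial n : ℝ)) := by
      rw [hEn]
      have h1 : SS z n ≤ C * (1 / (Nat.factorial (n+1) : ℝ)) := SS_le z n
      have h2 : C * (1 / (Nat.factorial (n+1) : ℝ)) ≤ C * (1 / (Nat.factorial n : ℝ)) := by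
        apply mul_le_mul_of_nonneg_left _ hC0
        apply one_div_le_one_div_of_le (fac_pos n)
        exact_mod_cast Nat.factorial_le (Nat.le_succ n)
      have hz1 : |z|^(2*n+1) = (z^2)^n * |z| := by
        rw [pow_succ, pow_mul, sq_abs]
      calc (2:ℝ)^n * |z|^(2*n+1) * SS z n
          ≤ 2^n * |z|^(2*n+1) * (C * (1 / (Nat.factorial (n+1) : ℝ))) :=
            mul_le_mul_of_nonneg_left h1 (by positivity)
        _ ≤ 2^n * |z|^(2*n+1) * (C * (1 / (Nat.factorial n : ℝ))) :=
            mul_le_mul_of_nonneg_left h2 (by positivity)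
        _ = |z| * C * ((2*z^2)^n / (Nat.factorial n : ℝ)) := by
            rw [hz1, mul_pow]; ring
    calc |Real.sinh z * q n - Real.cosh z * p n| / (q n * Real.cosh z)
        ≤ |Real.sinh z * q n - Real.cosh z * p n| := div_le_self (abs_nonneg _) hd1
      _ ≤ |z| * C * ((2*z^2)^n / (Nat.factorial n : ℝ)) := hnum
  -- conclude by squeezing
  have htend : Tendsto (fun n : ℕ => |z| * C * ((2*z^2)^n / (Nat.factorial n : ℝ)))
      atTop (nhds 0) := by
    have h := FloorSemiring.tendsto_pow_div_factorial_atTop (K := ℝ) (2*z^2)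
    have h2 := h.const_mul (|z| * C)
    simpa using h2
  have h0 : Tendsto (fun n => p n / q n - Real.tanh z) atTop (nhds 0) :=
    squeeze_zero_norm (fun n => by simpa [Real.norm_eq_abs] using hbound n) htend
  have hfin := h0.add_const (Real.tanh z)
  simpa using hfin
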